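/- Integral representation step in Lemma 1: for 0 < γ < 1, a > 0, and t > 0, Re[ i ∫_0^∞ e^{-kt} exp(-a e^{-iπγ} k^γ) dk ] = -(1/π)·π f_γ(t) where, after expanding the inner exponential in its power series and integrating term by term using ∫_0^∞ e^{-kt} k^{nγ} dk = Γ(nγ+1) t^{-nγ-1}, one obtains ∫_0^∞ e^{-kt} exp(-a e^{-iπγ} k^γ) dk = Σ_{n=0}^∞ ((-a)^n e^{-inπγ}/n!) Γ(nγ+1) t^{-nγ-1}. -/

import Mathlib

open Real Complex MeasureTheory

lemma cexp_eq_tsum' (z : ℂ) : Complex.exp z = ∑' n : ℕ, z ^ n / (Nat.factorial n) := by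
  rw [Complex.exp_eq_exp_ℂ, NormedSpace.exp_eq_tsum_div]

lemma rexp_eq_tsum' (x : ℝ) : Real.exp x = ∑' n : ℕ, x ^ n / (Nat.factorial n) := by
  rw [Real.exp_eq_exp_ℝ, NormedSpace.exp_eq_tsum_div]

lemma rpow_cont (γ : ℝ) (hγ0 : 0 < γ) : Continuous fun x : ℝ => x ^ γ := by
  rw [continuous_iff_continuousAt]
  exact fun x => Real.continuousAt_rpow_const x γ (Or.inr hγ0.le)

lemma aux_integrable (γ a t : ℝ) (hγ0 : 0 < γ) (hγ1 : γ < 1) (ha : 0 < a) (ht : 0 < t) :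
    IntegrableOn (fun k : ℝ => Real.exp (a * k ^ γ - t * k)) (Set.Ioi 0) := by
  have hcont : Continuous fun k : ℝ => Real.exp (a * k ^ γ - t * k) :=
    ((continuous_const.mul (rpow_cont γ hγ0)).sub (continuous_const.mul continuous_id)).rexp
  refine integrable_of_isBigO_exp_neg (a := 0) (b := t / 2) (by positivity)
    hcont.continuousOn ?_
  apply Asymptotics.IsBigO.of_bound 1
  have h1γ : (0:ℝ) < 1 - γ := by linarith
  set X : ℝ := (2 * a / t) ^ (1 / (1 - γ)) with hX
  have hXpos : 0 < X := Real.rpow_pos_of_pos (by positivity) _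
  filter_upwards [Filter.eventually_ge_atTop X] with x hx
  have hxpos : 0 < x := lt_of_lt_of_le hXpos hx
  have hkey : a * x ^ γ ≤ t / 2 * x := by
    have h2 : 2 * a / t ≤ x ^ (1 - γ) := by
      have : X ^ (1 - γ) = 2 * a / t := by
        rw [hX, ← Real.rpow_mul (by positivity), one_div_mul_cancel h1γ.ne', Real.rpow_one]
      rw [← this]
      exact Real.rpow_le_rpow hXpos.le hx h1γ.le
    have hxsplit : x = x ^ (1 - γ) * x ^ γ := by
      rw [← Real.rpow_add hxpos]; norm_num
    calc a * x ^ γ = t / 2 * (2 * a / t) * x ^ γ := by field_simp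
      _ ≤ t / 2 * x ^ (1 - γ) * x ^ γ := by
          have h3 := Real.rpow_nonneg hxpos.le γ
          have h4 : (0:ℝ) < t / 2 := by positivity
          exact mul_le_mul_of_nonneg_right (mul_le_mul_of_nonneg_left h2 h4.le) h3
      _ = t / 2 * x := by rw [mul_assoc, ← hxsplit]
  rw [Real.norm_eq_abs, Real.norm_eq_abs, Real.abs_exp, Real.abs_exp, one_mul]
  exact Real.exp_le_exp.2 (by linarith)
theorem stmt16 (γ a t : ℝ) (hγ0 : 0 < γ) (hγ1 : γ < 1) (ha : 0 < a) (ht : 0 < t) :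
    IntegrableOn (fun k : ℝ =>
      Complex.exp (-(k : ℂ) * (t : ℂ)) *
        Complex.exp (-(a : ℂ) * Complex.exp (-(π : ℂ) * (γ : ℂ) * Complex.I) *
          (k : ℂ) ^ (γ : ℂ))) (Set.Ioi 0) ∧
    (∫ k in Set.Ioi (0 : ℝ),
        Complex.exp (-(k : ℂ) * (t : ℂ)) *
          Complex.exp (-(a : ℂ) * Complex.exp (-(π : ℂ) * (γ : ℂ) * Complex.I) *
            (k : ℂ) ^ (γ : ℂ)))
      = ∑' n : ℕ, ((-(a : ℂ)) ^ n * Complex.exp (-(n : ℂ) * (π : ℂ) * (γ : ℂ) * Complex.I)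
          / (Nat.factorial n : ℂ)) *
          (Real.Gamma ((n : ℝ) * γ + 1) : ℂ) * ((t ^ (-(n : ℝ) * γ - 1) : ℝ) : ℂ) := by
  have hg := aux_integrable γ a t hγ0 hγ1 ha ht
  set c : ℂ := -(a : ℂ) * Complex.exp (-(π : ℂ) * (γ : ℂ) * Complex.I) with hc
  -- norm of c is a
  have hcnorm : ‖c‖ = a := by
    rw [hc, norm_mul, norm_neg, Complex.norm_exp,
      Complex.norm_real, Real.norm_eq_abs, abs_of_pos ha]
    simp [Complex.mul_re]
  -- the ofReal variant of the integrand
  set G : ℝ → ℂ := fun k => Complex.exp (-(k : ℂ) * (t : ℂ)) *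
    Complex.exp (c * ((k ^ γ : ℝ) : ℂ)) with hG
  have hGcont : Continuous G := by
    apply Continuous.mul
    · exact ((continuous_ofReal.neg.mul continuous_const)).cexp
    · exact (continuous_const.mul (Complex.continuous_ofReal.comp (rpow_cont γ hγ0))).cexp
  have hre : ∀ k : ℝ, (-(k : ℂ) * (t : ℂ)).re = -(k * t) := by
    intro k; simp [Complex.mul_re]
  -- pointwise equality on Ioi 0
  have hGeq : ∀ k ∈ Set.Ioi (0:ℝ),
      Complex.exp (-(k : ℂ) * (t : ℂ)) * Complex.exp (c * (k : ℂ) ^ (γ : ℂ)) = G k := by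
    intro k hk
    simp only [hG, ← Complex.ofReal_cpow (le_of_lt hk)]
  -- norm bound for G
  have hGbound : ∀ k ∈ Set.Ioi (0:ℝ), ‖G k‖ ≤ Real.exp (a * k ^ γ - t * k) := by
    intro k hk
    rw [hG, norm_mul, Complex.norm_exp,
      Complex.norm_exp, hre, ← Real.exp_add]
    apply Real.exp_le_exp.2
    have h1 : (c * ((k ^ γ : ℝ) : ℂ)).re ≤ a * k ^ γ := by
      calc (c * ((k ^ γ : ℝ) : ℂ)).re ≤ ‖c * ((k ^ γ : ℝ) : ℂ)‖ := Complex.re_le_norm _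
        _ = a * k ^ γ := by
            rw [norm_mul, hcnorm, Complex.norm_real, Real.norm_eq_abs,
              _root_.abs_of_nonneg (Real.rpow_nonneg (le_of_lt hk) γ)]
    linarith
  -- integrability of G, hence of the integrand
  have hGint : IntegrableOn G (Set.Ioi 0) := by
    apply Integrable.mono' hg hGcont.aestronglyMeasurable.restrict
    exact (ae_restrict_iff' measurableSet_Ioi).2 (Filter.Eventually.of_forall hGbound)
  have hint1 : IntegrableOn (fun k : ℝ =>
      Complex.exp (-(k : ℂ) * (t : ℂ)) * Complex.exp (c * (k : ℂ) ^ (γ : ℂ)))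
      (Set.Ioi 0) := by
    apply hGint.congr_fun (fun k hk => (hGeq k hk).symm) measurableSet_Ioi
  refine ⟨hint1, ?_⟩
  -- the terms of the series
  set F : ℕ → ℝ → ℂ := fun n k => Complex.exp (-(k:ℂ)*(t:ℂ)) *
    ((c * ((k ^ γ : ℝ) : ℂ)) ^ n / (Nat.factorial n)) with hF
  have hFmeas : ∀ n, AEStronglyMeasurable (F n) (volume.restrict (Set.Ioi 0)) := by
    intro n
    apply Continuous.aestronglyMeasurable
    exact ((continuous_ofReal.neg.mul continuous_const).cexp.mul
      (((continuous_const.mul (Complex.continuous_ofReal.comp (rpow_cont γ hγ0))).pow n).div_const _))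
  have hFnorm : ∀ (n : ℕ) (k : ℝ), 0 < k →
      ‖F n k‖ = Real.exp (-(k*t)) * ((a * k ^ γ) ^ n / (Nat.factorial n)) := by
    intro n k hk
    simp only [hF]
    rw [norm_mul, norm_div, norm_pow, norm_mul, Complex.norm_exp, hre, hcnorm, Complex.norm_real, Real.norm_eq_abs,
      _root_.abs_of_nonneg (Real.rpow_nonneg hk.le γ)]
    norm_num
  have hsum_lint : ∑' n : ℕ, ∫⁻ k in Set.Ioi 0, ‖F n k‖₊ ≠ ⊤ := by
    rw [← lintegral_tsum (f := fun n k => (‖F n k‖₊ : ENNReal)) (fun n => (hFmeas n).enorm)]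
    refine ne_of_lt ?_
    have hb : ∀ᵐ k ∂(volume.restrict (Set.Ioi 0)),
        (∑' n : ℕ, (‖F n k‖₊ : ENNReal)) ≤ ENNReal.ofReal (Real.exp (a * k ^ γ - t * k)) := by
      filter_upwards [ae_restrict_mem measurableSet_Ioi] with k hk
      have h1 : ∀ n : ℕ, (‖F n k‖₊ : ENNReal)
          = ENNReal.ofReal (Real.exp (-(k*t)) * ((a * k ^ γ) ^ n / (Nat.factorial n))) := by
        intro n; rw [← enorm_eq_nnnorm, ← ofReal_norm, hFnorm n k hk]
      rw [tsum_congr h1, ← ENNReal.ofReal_tsum_of_nonneg (fun n => by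
        have hk' : (0:ℝ) ≤ k ^ γ := Real.rpow_nonneg (le_of_lt hk) γ
        positivity)
        ((Real.summable_pow_div_factorial (a * k ^ γ)).mul_left _)]
      apply ENNReal.ofReal_le_ofReal
      rw [tsum_mul_left, ← rexp_eq_tsum', ← Real.exp_add]
      apply le_of_eq; ring_nf
    calc ∫⁻ k in Set.Ioi 0, ∑' n : ℕ, (‖F n k‖₊ : ENNReal)
        ≤ ∫⁻ k in Set.Ioi 0, ENNReal.ofReal (Real.exp (a * k ^ γ - t * k)) :=
          lintegral_mono_ae hb
      _ < ⊤ := by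
          have heq : ∀ k : ℝ, ENNReal.ofReal (Real.exp (a * k ^ γ - t * k))
              = (‖Real.exp (a * k ^ γ - t * k)‖₊ : ENNReal) := fun k => by
            rw [← enorm_eq_nnnorm, ← ofReal_norm, Real.norm_eq_abs, Real.abs_exp]
          simp_rw [heq]
          exact hg.2
  calc (∫ k in Set.Ioi (0:ℝ),
        Complex.exp (-(k:ℂ)*(t:ℂ)) * Complex.exp (c * (k:ℂ) ^ (γ:ℂ)))
      = ∫ k in Set.Ioi (0:ℝ), ∑' n : ℕ, F n k := by
        refine setIntegral_congr_fun measurableSet_Ioi (fun k hk => ?_)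
        rw [hGeq k hk]
        simp only [hG, hF]
        rw [cexp_eq_tsum' (c * ((k ^ γ : ℝ) : ℂ)), ← tsum_mul_left]
    _ = ∑' n : ℕ, ∫ k in Set.Ioi (0:ℝ), F n k := integral_tsum hFmeas hsum_lint
    _ = ∑' n : ℕ, ((-(a : ℂ)) ^ n * Complex.exp (-(n : ℂ) * (π : ℂ) * (γ : ℂ) * Complex.I)
          / (Nat.factorial n : ℂ)) *
          (Real.Gamma ((n : ℝ) * γ + 1) : ℂ) * ((t ^ (-(n : ℝ) * γ - 1) : ℝ) : ℂ) := by
        refine tsum_congr fun n => ?_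
        have hptw : ∀ k ∈ Set.Ioi (0:ℝ), F n k = (c ^ n / (Nat.factorial n)) *
            (((k ^ ((n:ℝ) * γ) * Real.exp (-(t * k)) : ℝ)) : ℂ) := by
          intro k hk
          simp only [hF]
          have h2 : ((k ^ γ : ℝ) : ℂ) ^ n = ((k ^ ((n:ℝ) * γ) : ℝ) : ℂ) := by
            rw [← Complex.ofReal_pow, ← Real.rpow_natCast (k ^ γ) n, ← Real.rpow_mul hk.le,
              mul_comm γ (n:ℝ)]
          have h3 : Complex.exp (-(k:ℂ) * (t:ℂ)) = ((Real.exp (-(t * k)) : ℝ) : ℂ) := by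
            rw [Complex.ofReal_exp]; congr 1; push_cast; ring
          rw [mul_pow, h2, h3, Complex.ofReal_mul]
          ring
        rw [setIntegral_congr_fun measurableSet_Ioi hptw, integral_const_mul]
        have hcoe : (∫ x in Set.Ioi (0:ℝ), ((x ^ ((n:ℝ) * γ) * Real.exp (-(t * x)) : ℝ) : ℂ))
            = ((∫ x in Set.Ioi (0:ℝ), x ^ ((n:ℝ) * γ) * Real.exp (-(t * x)) : ℝ) : ℂ) :=
          integral_ofReal
        rw [hcoe]
        have hI := integral_rpow_mul_exp_neg_mul_Ioi (a := (n:ℝ) * γ + 1) (r := t)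
          (by positivity) ht
        simp only [add_sub_cancel_right] at hI
        rw [hI]
        have hcpow : c ^ n = (-(a:ℂ)) ^ n *
            Complex.exp (-(n:ℂ) * (π:ℂ) * (γ:ℂ) * Complex.I) := by
          rw [hc, mul_pow, ← Complex.exp_nat_mul]
          ring_nf
        have hrpow : t ^ (-(n:ℝ) * γ - 1) = ((1:ℝ)/t) ^ ((n:ℝ) * γ + 1) := by
          rw [show (-(n:ℝ) * γ - 1) = -((n:ℝ) * γ + 1) by ring, Real.rpow_neg ht.le,
            one_div, Real.inv_rpow ht.le]
        rw [hcpow, hrpow]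
        push_cast
        ring
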